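/- Let X and Y be n×n positive semidefinite complex matrices and let I be the identity matrix. Then for every index j, λ_j↓((X + I)⁻¹ − (X + Y + I)⁻¹) ≤ λ_j↓(I − (Y + I)⁻¹). Equivalently, with f(x) = x/(x+1), one has λ_j↓(f(X + Y) − f(X)) ≤ λ_j↓(f(Y)) for all j. -/

import Mathlib

open Matrix
open scoped ComplexOrder

/-- The eigenvalues of a square matrix, sorted in non-increasing order
(junk value `0` if the matrix is not Hermitian). -/
noncomputable def eigValsDown {𝕜 : Type*} [RCLike 𝕜] {n : ℕ}
    (A : Matrix (Fin n) (Fin n) 𝕜) : Fin n → ℝ :=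
  if hA : A.IsHermitian then
    fun k => (hA.eigenvalues ∘ Tuple.sort hA.eigenvalues) k.rev
  else 0

/-- Functional calculus: apply a real function to a Hermitian matrix via its spectral
decomposition (junk value `0` if the matrix is not Hermitian). -/
noncomputable def matFun {𝕜 : Type*} [RCLike 𝕜] {n : ℕ} (h : ℝ → ℝ)
    (A : Matrix (Fin n) (Fin n) 𝕜) : Matrix (Fin n) (Fin n) 𝕜 :=
  if hA : A.IsHermitian then
    (hA.eigenvectorUnitary : Matrix (Fin n) (Fin n) 𝕜) *
      Matrix.diagonal (fun i => (h (hA.eigenvalues i) : 𝕜)) *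
      star (hA.eigenvectorUnitary : Matrix (Fin n) (Fin n) 𝕜)
  else 0

/-- The operator norm (largest singular value) of a matrix. -/
noncomputable def opNorm {𝕜 : Type*} [RCLike 𝕜] {n : ℕ}
    (A : Matrix (Fin n) (Fin n) 𝕜) : ℝ :=
  ‖Matrix.toEuclideanCLM (𝕜 := 𝕜) A‖

/-- The matrix absolute value `|M| = (Mᴴ M)^(1/2)`. -/
noncomputable def matAbs {𝕜 : Type*} [RCLike 𝕜] {n : ℕ}
    (A : Matrix (Fin n) (Fin n) 𝕜) : Matrix (Fin n) (Fin n) 𝕜 :=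
  (Matrix.posSemidef_conjTranspose_mul_self A).1.eigenvectorUnitary.1 *
    diagonal ((↑) ∘ (√·) ∘ (Matrix.posSemidef_conjTranspose_mul_self A).1.eigenvalues) *
    (star (Matrix.posSemidef_conjTranspose_mul_self A).1.eigenvectorUnitary : Matrix (Fin n) (Fin n) 𝕜)

/-- The Ky Fan `k`-norm: the sum of the `k` largest singular values. -/
noncomputable def kyFanNorm {𝕜 : Type*} [RCLike 𝕜] {n : ℕ} (k : ℕ)
    (A : Matrix (Fin n) (Fin n) 𝕜) : ℝ :=
  ∑ j ∈ Finset.univ.filter (fun j : Fin n => (j : ℕ) < k), eigValsDown (matAbs A) j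


section Aux
open Polynomial
open scoped InnerProductSpace
variable {n : ℕ}

-- S1: equal multisets give equal sorted tuples
lemma msort_unique {u v : Fin n → ℝ}
    (h : Finset.univ.val.map u = Finset.univ.val.map v) :
    u ∘ Tuple.sort u = v ∘ Tuple.sort v := by
  apply List.ofFn_injective
  refine (fun hp h1 h2 => List.Perm.eq_of_sortedLE h1 h2 hp) ?_ ?_ ?_
  · rw [← Multiset.coe_eq_coe]
    have e1 : ∀ w : Fin n → ℝ, (↑(List.ofFn (w ∘ Tuple.sort w)) : Multiset ℝ)
        = Finset.univ.val.map w := by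
      intro w
      rw [Multiset.coe_eq_coe.mpr ((Tuple.sort w).ofFn_comp_perm w)]
      rw [List.ofFn_eq_map]
      simp [Fin.univ_def, Finset.univ]
      rfl
    rw [e1, e1, h]
  · exact (Tuple.monotone_sort u).sortedLE_ofFn
  · exact (Tuple.monotone_sort v).sortedLE_ofFn

-- S2
lemma msort_comp_monotone {g : ℝ → ℝ} (hg : Monotone g) (v : Fin n → ℝ) :
    (g ∘ v) ∘ Tuple.sort (g ∘ v) = g ∘ (v ∘ Tuple.sort v) := by
  have := Tuple.unique_monotone (f := g ∘ v) (σ := Tuple.sort (g ∘ v)) (τ := Tuple.sort v)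
    (Tuple.monotone_sort _) (by
      have : (g ∘ v) ∘ Tuple.sort v = g ∘ (v ∘ Tuple.sort v) := rfl
      rw [this]
      exact hg.comp (Tuple.monotone_sort v))
  rw [this]
  rfl

lemma charpoly_conj_eq {R : Type*} [CommRing R] {U A V : Matrix (Fin n) (Fin n) R}
    (h : U * V = 1) : (U * A * V).charpoly = A.charpoly := by
  have hmap : ∀ M N : Matrix (Fin n) (Fin n) R,
      (C.mapMatrix : Matrix (Fin n) (Fin n) R →+* _) (M * N)
        = C.mapMatrix M * C.mapMatrix N := fun M N => map_mul _ M N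
  have hc : ∀ M : Matrix (Fin n) (Fin n) R[X],
      (scalar (Fin n)) X * M = M * (scalar (Fin n)) X :=
    fun M => scalar_commute (X : R[X]) (fun r' => Commute.all _ _) M
  have key : charmatrix (U * A * V) = C.mapMatrix U * charmatrix A * C.mapMatrix V := by
    unfold charmatrix
    rw [mul_sub, sub_mul, ← hmap, ← hmap]
    congr 1
    · rw [← hc, mul_assoc, ← hmap, h, _root_.map_one, mul_one]
  rw [Matrix.charpoly, key, det_mul, det_mul, mul_right_comm, ← det_mul, ← hmap, h,
    _root_.map_one, det_one, one_mul]
  rfl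

lemma charpoly_diagonal_eq {R : Type*} [CommRing R] (d : Fin n → R) :
    (diagonal d).charpoly = ∏ i, (X - C (d i)) := by
  have : charmatrix (diagonal d) = diagonal (fun i => (X : R[X]) - C (d i)) := by
    ext i j
    rcases eq_or_ne i j with rfl | hij
    · simp [charmatrix_apply]
    · simp [charmatrix_apply, diagonal_apply_ne _ hij, hij]
  rw [Matrix.charpoly, this, det_diagonal]

lemma roots_of_diag {A : Matrix (Fin n) (Fin n) ℂ} {V W : Matrix (Fin n) (Fin n) ℂ}
    (h1 : V * W = 1) (e : Fin n → ℝ)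
    (h2 : A = V * diagonal (fun i => (e i : ℂ)) * W) :
    A.charpoly.roots = Finset.univ.val.map (fun i => (e i : ℂ)) := by
  rw [h2, charpoly_conj_eq h1, charpoly_diagonal_eq]
  have : ∏ i, (X - C ((e i : ℂ)))
      = ((Finset.univ.val.map (fun i => (e i : ℂ))).map (fun a => X - C a)).prod := by
    rw [Multiset.map_map]; rfl
  rw [this, roots_multiset_prod_X_sub_C]

lemma eig_multiset_eq {A : Matrix (Fin n) (Fin n) ℂ} (hA : A.IsHermitian)
    {V W : Matrix (Fin n) (Fin n) ℂ} (hVW : V * W = 1) (d : Fin n → ℝ)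
    (hAeq : A = V * diagonal (fun i => (d i : ℂ)) * W) :
    Finset.univ.val.map hA.eigenvalues = Finset.univ.val.map d := by
  have hspec : A = (hA.eigenvectorUnitary : Matrix (Fin n) (Fin n) ℂ) *
      diagonal (fun i => ((hA.eigenvalues i : ℝ) : ℂ)) *
      star (hA.eigenvectorUnitary : Matrix (Fin n) (Fin n) ℂ) := hA.spectral_theorem
  have hU : (hA.eigenvectorUnitary : Matrix (Fin n) (Fin n) ℂ) *
      star (hA.eigenvectorUnitary : Matrix (Fin n) (Fin n) ℂ) = 1 :=
    mem_unitaryGroup_iff.mp hA.eigenvectorUnitary.2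
  have h1 := roots_of_diag hU hA.eigenvalues hspec
  have h2 := roots_of_diag hVW d hAeq
  have h3 : (Finset.univ.val.map hA.eigenvalues).map (fun r : ℝ => (r : ℂ))
      = (Finset.univ.val.map d).map (fun r : ℝ => (r : ℂ)) := by
    rw [Multiset.map_map, Multiset.map_map]
    exact h1.symm.trans h2
  exact Multiset.map_injective Complex.ofReal_injective h3

lemma eigValsDown_eq_of_diag {A : Matrix (Fin n) (Fin n) ℂ} (hA : A.IsHermitian)
    {V W : Matrix (Fin n) (Fin n) ℂ} (hVW : V * W = 1) (d : Fin n → ℝ)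
    (hAeq : A = V * diagonal (fun i => (d i : ℂ)) * W) :
    eigValsDown A = fun k => (d ∘ Tuple.sort d) k.rev := by
  rw [eigValsDown, dif_pos hA]
  funext k
  exact congrFun (msort_unique (eig_multiset_eq hA hVW d hAeq)) k.rev

variable {A : Matrix (Fin n) (Fin n) ℂ}

/-- Orthonormal basis of eigenvectors, ordered by decreasing eigenvalue. -/
noncomputable def descB (hA : A.IsHermitian) :
    OrthonormalBasis (Fin n) ℂ (EuclideanSpace ℂ (Fin n)) :=
  hA.eigenvectorBasis.reindex (Fin.revPerm.trans (Tuple.sort hA.eigenvalues)).symm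

lemma descB_apply (hA : A.IsHermitian) (k : Fin n) :
    descB hA k = hA.eigenvectorBasis (Tuple.sort hA.eigenvalues k.rev) := by
  simp [descB, OrthonormalBasis.reindex_apply]

lemma eigValsDown_eq_of_herm (hA : A.IsHermitian) (k : Fin n) :
    eigValsDown A k = hA.eigenvalues (Tuple.sort hA.eigenvalues k.rev) := by
  rw [eigValsDown, dif_pos hA]; rfl

lemma eigValsDown_antitone (hA : A.IsHermitian) : Antitone (eigValsDown A) := by
  intro k l hkl
  rw [eigValsDown_eq_of_herm hA, eigValsDown_eq_of_herm hA]
  exact Tuple.monotone_sort hA.eigenvalues (Fin.rev_le_rev.mpr hkl)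

lemma toEuclideanLin_descB (hA : A.IsHermitian) (k : Fin n) :
    toEuclideanLin A (descB hA k) = (eigValsDown A k : ℂ) • descB hA k := by
  have h := hA.mulVec_eigenvectorBasis (Tuple.sort hA.eigenvalues k.rev)
  ext i
  have := congrFun h i
  simp only [toEuclideanLin_apply, descB_apply, eigValsDown_eq_of_herm hA,
    PiLp.smul_apply, smul_eq_mul]
  calc (A *ᵥ (WithLp.equiv 2 (Fin n → ℂ)) (hA.eigenvectorBasis (Tuple.sort hA.eigenvalues k.rev))) i
      = (A *ᵥ ⇑(hA.eigenvectorBasis (Tuple.sort hA.eigenvalues k.rev))) i := rfl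
    _ = (hA.eigenvalues (Tuple.sort hA.eigenvalues k.rev) •
          ⇑(hA.eigenvectorBasis (Tuple.sort hA.eigenvalues k.rev))) i := this
    _ = _ := by
        simp [Pi.smul_apply, Complex.real_smul]

lemma repr_toEuclideanLin (hA : A.IsHermitian) (x : EuclideanSpace ℂ (Fin n)) (k : Fin n) :
    (descB hA).repr (toEuclideanLin A x) k
      = (eigValsDown A k : ℂ) * (descB hA).repr x k := by
  rw [OrthonormalBasis.repr_apply_apply, OrthonormalBasis.repr_apply_apply,
    ← (isHermitian_iff_isSymmetric.mp hA) (descB hA k) x, toEuclideanLin_descB hA,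
    inner_smul_left, Complex.conj_ofReal]

lemma inner_toEuclideanLin (hA : A.IsHermitian) (x : EuclideanSpace ℂ (Fin n)) :
    (inner ℂ x (toEuclideanLin A x) : ℂ)
      = ((∑ k, eigValsDown A k * Complex.normSq ((descB hA).repr x k) : ℝ) : ℂ) := by
  rw [← (descB hA).repr.inner_map_map x (toEuclideanLin A x)]
  rw [PiLp.inner_apply]
  push_cast
  refine Finset.sum_congr rfl fun k _ => ?_
  rw [repr_toEuclideanLin hA]
  rw [RCLike.inner_apply]
  rw [show (eigValsDown A k : ℂ) * (descB hA).repr x k * (starRingEnd ℂ) ((descB hA).repr x k)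
    = (eigValsDown A k : ℂ) * ((descB hA).repr x k * (starRingEnd ℂ) ((descB hA).repr x k)) by ring]
  rw [Complex.mul_conj]

lemma normsq_eq_sum (hA : A.IsHermitian) (x : EuclideanSpace ℂ (Fin n)) :
    ‖x‖ ^ 2 = ∑ k, Complex.normSq ((descB hA).repr x k) := by
  have h1 : (inner ℂ x x : ℂ) = ((‖x‖ ^ 2 : ℝ) : ℂ) := by
    rw [inner_self_eq_norm_sq_to_K, Complex.ofReal_pow]; rfl
  have h2 : (inner ℂ x x : ℂ) = ((∑ k, Complex.normSq ((descB hA).repr x k) : ℝ) : ℂ) := by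
    rw [← (descB hA).repr.inner_map_map x x, PiLp.inner_apply]
    push_cast
    refine Finset.sum_congr rfl fun k _ => ?_
    rw [RCLike.inner_apply, Complex.mul_conj]
  exact_mod_cast h1.symm.trans h2

lemma repr_eq_zero_of_mem_span (hA : A.IsHermitian) {ι : Type} [Fintype ι]
    (f : ι → Fin n) {x : EuclideanSpace ℂ (Fin n)}
    (hx : x ∈ Submodule.span ℂ (Set.range fun i => descB hA (f i)))
    {k : Fin n} (hk : ∀ i, f i ≠ k) : (descB hA).repr x k = 0 := by
  rw [OrthonormalBasis.repr_apply_apply]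
  induction hx using Submodule.span_induction with
  | mem y hy =>
      obtain ⟨i, rfl⟩ := hy
      exact (descB hA).orthonormal.2 (Ne.symm (hk i))
  | zero => exact inner_zero_right _
  | add y z hy hz hy' hz' => rw [inner_add_right, hy', hz', add_zero]
  | smul c y hy hy' => rw [inner_smul_right, hy', mul_zero]

lemma span_descB_finrank (hA : A.IsHermitian) {ι : Type} [Fintype ι] (f : ι → Fin n)
    (hf : Function.Injective f) :
    Module.finrank ℂ (Submodule.span ℂ (Set.range fun i => descB hA (f i)))
      = Fintype.card ι :=
  finrank_span_eq_card (((descB hA).orthonormal.comp f hf).linearIndependent)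

lemma lower_bound_subspace (hA : A.IsHermitian) (j : Fin n) :
    ∃ V : Submodule ℂ (EuclideanSpace ℂ (Fin n)), Module.finrank ℂ V = j.val + 1 ∧
      ∀ x ∈ V, eigValsDown A j * ‖x‖ ^ 2 ≤ Complex.re (inner ℂ x (toEuclideanLin A x)) := by
  have hle : j.val + 1 ≤ n := j.isLt
  refine ⟨Submodule.span ℂ (Set.range fun i : Fin (j.val + 1) => descB hA (Fin.castLE hle i)),
    ?_, ?_⟩
  · rw [span_descB_finrank hA _ (Fin.castLE_injective hle)]; exact Fintype.card_fin _
  · intro x hx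
    have hzero : ∀ k : Fin n, ¬(k ≤ j) → (descB hA).repr x k = 0 := by
      intro k hk
      refine repr_eq_zero_of_mem_span hA _ hx fun i he => hk ?_
      rw [← he]
      exact Fin.mk_le_mk.mpr (by omega)
    rw [inner_toEuclideanLin hA, Complex.ofReal_re, normsq_eq_sum hA, Finset.mul_sum]
    refine Finset.sum_le_sum fun k _ => ?_
    by_cases h : (descB hA).repr x k = 0
    · simp [h]
    · have hk : k ≤ j := by by_contra hc; exact h (hzero k hc)
      exact mul_le_mul_of_nonneg_right (eigValsDown_antitone hA hk) (Complex.normSq_nonneg _)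

lemma upper_bound_subspace (hA : A.IsHermitian) (j : Fin n) :
    ∃ W : Submodule ℂ (EuclideanSpace ℂ (Fin n)), Module.finrank ℂ W = n - j.val ∧
      ∀ x ∈ W, Complex.re (inner ℂ x (toEuclideanLin A x)) ≤ eigValsDown A j * ‖x‖ ^ 2 := by
  refine ⟨Submodule.span ℂ (Set.range fun i : Fin (n - j.val) =>
    descB hA ⟨j.val + i.val, by omega⟩), ?_, ?_⟩
  · rw [span_descB_finrank hA _ (fun i i' h => by
      have h2 := congrArg Fin.val h
      simp only at h2
      exact Fin.ext (by omega))]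
    exact Fintype.card_fin _
  · intro x hx
    have hzero : ∀ k : Fin n, ¬(j ≤ k) → (descB hA).repr x k = 0 := by
      intro k hk
      refine repr_eq_zero_of_mem_span hA _ hx fun i he => hk ?_
      rw [← he]
      exact Fin.mk_le_mk.mpr (by omega)
    rw [inner_toEuclideanLin hA, Complex.ofReal_re, normsq_eq_sum hA, Finset.mul_sum]
    refine Finset.sum_le_sum fun k _ => ?_
    by_cases h : (descB hA).repr x k = 0
    · simp [h]
    · have hk : j ≤ k := by by_contra hc; exact h (hzero k hc)
      exact mul_le_mul_of_nonneg_right (eigValsDown_antitone hA hk) (Complex.normSq_nonneg _)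

lemma psd_re_inner_nonneg {M : Matrix (Fin n) (Fin n) ℂ} (hM : M.PosSemidef)
    (x : EuclideanSpace ℂ (Fin n)) :
    0 ≤ Complex.re (inner ℂ x (toEuclideanLin M x)) := by
  have h := hM.re_dotProduct_nonneg ((WithLp.equiv 2 (Fin n → ℂ)) x)
  rw [EuclideanSpace.inner_eq_star_dotProduct, toEuclideanLin_apply, dotProduct_comm]
  exact h

lemma eigValsDown_mono {B : Matrix (Fin n) (Fin n) ℂ} (hA : A.IsHermitian)
    (hB : B.IsHermitian) (hAB : (B - A).PosSemidef) (j : Fin n) :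
    eigValsDown A j ≤ eigValsDown B j := by
  obtain ⟨V, hVrank, hV⟩ := lower_bound_subspace hA j
  obtain ⟨W, hWrank, hW⟩ := upper_bound_subspace hB j
  have hsup : Module.finrank ℂ ↥(V ⊔ W) ≤ n := by
    refine le_trans (Submodule.finrank_le _) (le_of_eq ?_)
    simp [finrank_euclideanSpace_fin]
  have hd := Submodule.finrank_sup_add_finrank_inf_eq V W
  have hjn : j.val < n := j.isLt
  have hpos : 0 < Module.finrank ℂ ↥(V ⊓ W) := by omega
  obtain ⟨⟨x, hxmem⟩, hxne⟩ := Module.finrank_pos_iff_exists_ne_zero.mp hpos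
  have hxne0 : x ≠ 0 := fun h => hxne (Subtype.ext h)
  have hx2 : 0 < ‖x‖ ^ 2 := by
    have := norm_pos_iff.mpr hxne0
    positivity
  have c1 := hV x hxmem.1
  have c2 := hW x hxmem.2
  have c3 : Complex.re (inner ℂ x (toEuclideanLin A x))
      ≤ Complex.re (inner ℂ x (toEuclideanLin B x)) := by
    have h0 := psd_re_inner_nonneg hAB x
    have hsub : toEuclideanLin (B - A) x = toEuclideanLin B x - toEuclideanLin A x := by
      rw [map_sub]; rfl
    rw [hsub, inner_sub_right] at h0
    simp only [Complex.sub_re] at h0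
    linarith
  have : eigValsDown A j * ‖x‖ ^ 2 ≤ eigValsDown B j * ‖x‖ ^ 2 := by linarith
  exact le_of_mul_le_mul_right (by linarith [this]) hx2

lemma toEuclideanLin_mul_apply (M N : Matrix (Fin n) (Fin n) ℂ) (x : EuclideanSpace ℂ (Fin n)) :
    toEuclideanLin (M * N) x = toEuclideanLin M (toEuclideanLin N x) := by
  simp only [toEuclideanLin_apply, Equiv.apply_symm_apply, Matrix.mulVec_mulVec]

lemma toEuclideanLin_one_apply (x : EuclideanSpace ℂ (Fin n)) :
    toEuclideanLin (1 : Matrix (Fin n) (Fin n) ℂ) x = x := by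
  simp only [toEuclideanLin_apply, Matrix.one_mulVec, Equiv.symm_apply_apply]

lemma inner_toEuclideanLin_conjTranspose (K : Matrix (Fin n) (Fin n) ℂ)
    (x y : EuclideanSpace ℂ (Fin n)) :
    (inner ℂ x (toEuclideanLin Kᴴ y) : ℂ) = inner ℂ (toEuclideanLin K x) y := by
  rw [EuclideanSpace.inner_eq_star_dotProduct, EuclideanSpace.inner_eq_star_dotProduct,
    toEuclideanLin_apply, toEuclideanLin_apply, WithLp.ofLp_toLp, WithLp.ofLp_toLp,
    star_mulVec, dotProduct_comm, dotProduct_mulVec, dotProduct_comm]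

lemma eigValsDown_nonneg {M : Matrix (Fin n) (Fin n) ℂ} (hM : M.PosSemidef) (j : Fin n) :
    0 ≤ eigValsDown M j := by
  rw [eigValsDown_eq_of_herm hM.isHermitian]
  exact hM.eigenvalues_nonneg _

lemma eigValsDown_conj_le {M K : Matrix (Fin n) (Fin n) ℂ} (hM : M.PosSemidef)
    (hK : IsUnit K) (hcon : ∀ x : EuclideanSpace ℂ (Fin n), ‖toEuclideanLin K x‖ ≤ ‖x‖)
    (j : Fin n) : eigValsDown (Kᴴ * M * K) j ≤ eigValsDown M j := by
  have hT : (Kᴴ * M * K).IsHermitian := by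
    have h := hM.isHermitian
    unfold Matrix.IsHermitian at h ⊢
    rw [conjTranspose_mul, conjTranspose_mul, conjTranspose_conjTranspose, h, mul_assoc]
  obtain ⟨V, hVrank, hV⟩ := lower_bound_subspace hT j
  obtain ⟨W, hWrank, hW⟩ := upper_bound_subspace hM.isHermitian j
  set L : EuclideanSpace ℂ (Fin n) →ₗ[ℂ] EuclideanSpace ℂ (Fin n) := toEuclideanLin K with hL
  have hinj : Function.Injective L := by
    intro a b hab
    have h1 : K⁻¹ * K = 1 := nonsing_inv_mul K ((isUnit_iff_isUnit_det K).mp hK)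
    have h2 := congrArg (toEuclideanLin K⁻¹) hab
    rwa [← toEuclideanLin_mul_apply, ← toEuclideanLin_mul_apply, h1,
      toEuclideanLin_one_apply, toEuclideanLin_one_apply] at h2
  set V' := Submodule.map L V with hV'
  have hV'rank : Module.finrank ℂ V' = j.val + 1 := by
    rw [← hVrank]
    exact (LinearEquiv.finrank_eq (Submodule.equivMapOfInjective L hinj V)).symm
  have hsup : Module.finrank ℂ ↥(V' ⊔ W) ≤ n := by
    refine le_trans (Submodule.finrank_le _) (le_of_eq ?_)
    simp [finrank_euclideanSpace_fin]
  have hd := Submodule.finrank_sup_add_finrank_inf_eq V' W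
  have hjn : j.val < n := j.isLt
  have hpos : 0 < Module.finrank ℂ ↥(V' ⊓ W) := by omega
  obtain ⟨⟨y, hymem⟩, hyne⟩ := Module.finrank_pos_iff_exists_ne_zero.mp hpos
  have hyne0 : y ≠ 0 := fun h => hyne (Subtype.ext h)
  obtain ⟨x, hxV, hxy⟩ := hymem.1
  have hxne0 : x ≠ 0 := by rintro rfl; exact hyne0 (hxy ▸ (map_zero L))
  have hx2 : 0 < ‖x‖ ^ 2 := by
    have := norm_pos_iff.mpr hxne0
    positivity
  have c1 := hV x hxV
  have c2 := hW y hymem.2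
  have key : (inner ℂ x (toEuclideanLin (Kᴴ * M * K) x) : ℂ)
      = inner ℂ y (toEuclideanLin M y) := by
    rw [mul_assoc, toEuclideanLin_mul_apply, inner_toEuclideanLin_conjTranspose,
      toEuclideanLin_mul_apply, ← hxy]
  have c4 : ‖y‖ ^ 2 ≤ ‖x‖ ^ 2 := by
    rw [← hxy]
    exact pow_le_pow_left₀ (norm_nonneg _) (hcon x) 2
  have hMj := eigValsDown_nonneg hM j
  have : eigValsDown (Kᴴ * M * K) j * ‖x‖ ^ 2 ≤ eigValsDown M j * ‖x‖ ^ 2 := by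
    rw [key] at c1
    nlinarith
  exact le_of_mul_le_mul_right (by linarith [this]) hx2


/-- The monotone extension of `r ↦ 1 - (r+1)⁻¹` from `[0,∞)`. -/
noncomputable def gfun (r : ℝ) : ℝ := 1 - (max r 0 + 1)⁻¹

lemma gfun_monotone : Monotone gfun := by
  intro a b hab
  unfold gfun
  have h1 : (0:ℝ) < max a 0 + 1 := by positivity
  have h2 : max a 0 + 1 ≤ max b 0 + 1 := by
    have := max_le_max hab (le_refl (0:ℝ)); linarith
  gcongr

lemma gfun_nonneg (r : ℝ) : 0 ≤ gfun r := by
  unfold gfun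
  have h1 : (0:ℝ) < max r 0 + 1 := by positivity
  have h2 : (max r 0 + 1)⁻¹ ≤ 1 := by
    rw [inv_le_one_iff₀]; right; simp [le_max_right]
  linarith

lemma gfun_eq {r : ℝ} (hr : 0 ≤ r) : gfun r = 1 - (r + 1)⁻¹ := by
  unfold gfun; rw [max_eq_left hr]

/-- Diagonalization of `1 - (Z+1)⁻¹` for PSD `Z`. -/
lemma one_sub_inv_eq {Z : Matrix (Fin n) (Fin n) ℂ} (hZ : Z.PosSemidef) :
    1 - (Z + 1)⁻¹ =
      (hZ.isHermitian.eigenvectorUnitary : Matrix (Fin n) (Fin n) ℂ) *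
        diagonal (fun i => ((gfun (hZ.isHermitian.eigenvalues i) : ℝ) : ℂ)) *
        star (hZ.isHermitian.eigenvectorUnitary : Matrix (Fin n) (Fin n) ℂ) := by
  set hH := hZ.isHermitian
  set U : Matrix (Fin n) (Fin n) ℂ := (hH.eigenvectorUnitary : Matrix (Fin n) (Fin n) ℂ) with hUdef
  set μ := hH.eigenvalues with hμdef
  have hU1 : U * star U = 1 := mem_unitaryGroup_iff.mp hH.eigenvectorUnitary.2
  have hU2 : star U * U = 1 := mem_unitaryGroup_iff'.mp hH.eigenvectorUnitary.2
  have hZeq : Z = U * diagonal (fun i => ((μ i : ℝ) : ℂ)) * star U := hH.spectral_theorem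
  have hsum : Z + 1 = U * (diagonal (fun i => ((μ i : ℝ) : ℂ)) + 1) * star U := by
    rw [hZeq, mul_add, add_mul, mul_one, hU1]
  have hdiag : diagonal (fun i => ((μ i : ℝ) : ℂ)) + 1
      = diagonal (fun i => ((μ i : ℝ) : ℂ) + 1) := by
    rw [← diagonal_one, diagonal_add]
  have hne : ∀ i, ((μ i : ℝ) : ℂ) + 1 ≠ 0 := by
    intro i
    have h := hZ.eigenvalues_nonneg i
    rw [show ((μ i : ℝ) : ℂ) + 1 = (((μ i + 1 : ℝ)) : ℂ) by push_cast; ring]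
    rw [Ne, Complex.ofReal_eq_zero]
    have : (0:ℝ) ≤ μ i := h
    intro hc; linarith
  have hdinv : (diagonal (fun i => ((μ i : ℝ) : ℂ) + 1))⁻¹
      = diagonal (fun i => (((μ i : ℝ) : ℂ) + 1)⁻¹) := by
    apply inv_eq_right_inv
    rw [diagonal_mul_diagonal,
      show (fun i => (((μ i : ℝ) : ℂ) + 1) * (((μ i : ℝ) : ℂ) + 1)⁻¹) = fun _ => (1:ℂ)
        from funext fun i => mul_inv_cancel₀ (hne i), diagonal_one]
  have hinv : (Z + 1)⁻¹ = U * diagonal (fun i => (((μ i : ℝ) : ℂ) + 1)⁻¹) * star U := by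
    rw [hsum, hdiag, Matrix.mul_inv_rev, Matrix.mul_inv_rev, inv_eq_left_inv hU1,
      inv_eq_left_inv hU2, hdinv, ← mul_assoc]
  have hone : (1 : Matrix (Fin n) (Fin n) ℂ)
      = U * diagonal (fun _ : Fin n => (1:ℂ)) * star U := by
    rw [diagonal_one, mul_one, hU1]
  rw [hinv]
  conv_lhs => rw [hone]
  rw [← sub_mul, ← mul_sub, diagonal_sub]
  refine congrArg (fun D => U * D * star U) (congrArg diagonal (funext fun i => ?_))
  have hμi : 0 ≤ μ i := hZ.eigenvalues_nonneg i
  rw [gfun_eq hμi]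
  push_cast
  ring

lemma posSemidef_one_sub_inv {Z : Matrix (Fin n) (Fin n) ℂ} (hZ : Z.PosSemidef) :
    (1 - (Z + 1)⁻¹).PosSemidef := by
  rw [one_sub_inv_eq hZ, Matrix.star_eq_conjTranspose]
  refine Matrix.PosSemidef.mul_mul_conjTranspose_same ?_ _
  refine Matrix.PosSemidef.diagonal fun i => ?_
  show (0:ℂ) ≤ _
  rw [Complex.zero_le_real]
  exact gfun_nonneg _

lemma eigValsDown_one_sub_inv {Z : Matrix (Fin n) (Fin n) ℂ} (hZ : Z.PosSemidef) (j : Fin n) :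
    eigValsDown (1 - (Z + 1)⁻¹) j = gfun (eigValsDown Z j) := by
  have hU1 : (hZ.isHermitian.eigenvectorUnitary : Matrix (Fin n) (Fin n) ℂ) *
      star (hZ.isHermitian.eigenvectorUnitary : Matrix (Fin n) (Fin n) ℂ) = 1 :=
    mem_unitaryGroup_iff.mp hZ.isHermitian.eigenvectorUnitary.2
  have h1 := eigValsDown_eq_of_diag (posSemidef_one_sub_inv hZ).isHermitian hU1
    (fun i => gfun (hZ.isHermitian.eigenvalues i)) (one_sub_inv_eq hZ)
  have h2 := congrFun (msort_comp_monotone gfun_monotone hZ.isHermitian.eigenvalues) j.rev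
  rw [congrFun h1 j]
  rw [show (fun i => gfun (hZ.isHermitian.eigenvalues i)) = gfun ∘ hZ.isHermitian.eigenvalues
    from rfl]
  rw [h2]
  rw [eigValsDown_eq_of_herm hZ.isHermitian]
  rfl

lemma contraction_of_ge_one {C : Matrix (Fin n) (Fin n) ℂ} (hC : C.IsHermitian)
    (hCu : IsUnit C) (hC2 : (C * C - 1).PosSemidef) (x : EuclideanSpace ℂ (Fin n)) :
    ‖toEuclideanLin C⁻¹ x‖ ≤ ‖x‖ := by
  set u : EuclideanSpace ℂ (Fin n) := toEuclideanLin C⁻¹ x with hu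
  have hxu : toEuclideanLin C u = x := by
    rw [hu, ← toEuclideanLin_mul_apply, mul_nonsing_inv C ((isUnit_iff_isUnit_det C).mp hCu),
      toEuclideanLin_one_apply]
  have h1 : 0 ≤ Complex.re (inner ℂ u (toEuclideanLin (C * C - 1) u)) :=
    psd_re_inner_nonneg hC2 u
  have hsym := (isHermitian_iff_isSymmetric.mp hC)
  have hres : ∀ y : EuclideanSpace ℂ (Fin n), Complex.re (inner ℂ y y : ℂ) = ‖y‖ ^ 2 := by
    intro y
    rw [inner_self_eq_norm_sq_to_K (𝕜 := ℂ)]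
    show (((‖y‖ : ℝ) : ℂ) ^ 2).re = ‖y‖ ^ 2
    rw [← Complex.ofReal_pow, Complex.ofReal_re]
  have h2 : Complex.re (inner ℂ u (toEuclideanLin (C * C) u)) = ‖x‖ ^ 2 := by
    rw [toEuclideanLin_mul_apply, hxu, ← hsym u x, hxu, hres x]
  have hsub : toEuclideanLin (C * C - 1) u
      = toEuclideanLin (C * C) u - toEuclideanLin 1 u := by rw [map_sub]; rfl
  rw [hsub, inner_sub_right] at h1
  simp only [Complex.sub_re, toEuclideanLin_one_apply] at h1
  have h3 : Complex.re (inner ℂ u u : ℂ) = ‖u‖ ^ 2 := hres u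
  have h4 : ‖u‖ ^ 2 ≤ ‖x‖ ^ 2 := by rw [← h2, ← h3] at *; linarith
  nlinarith [norm_nonneg u, norm_nonneg x]

end Aux

/-- from Lemma X.1.4 of Bhatia: for PSD `X, Y`,
`λ_j↓((X + I)⁻¹ - (X + Y + I)⁻¹) ≤ λ_j↓(I - (Y + I)⁻¹)` for every `j`. -/
theorem stmt10 {n : ℕ} (X Y : Matrix (Fin n) (Fin n) ℂ)
    (hX : X.PosSemidef) (hY : Y.PosSemidef) (j : Fin n) :
    eigValsDown ((X + 1)⁻¹ - (X + Y + 1)⁻¹) j ≤ eigValsDown (1 - (Y + 1)⁻¹) j := by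
  -- `C := √(X+1)`, `K := C⁻¹`, `Z := K Y K`; then
  -- `(X+1)⁻¹ - (X+Y+1)⁻¹ = K (1 - (Z+1)⁻¹) K` and `K` is a contraction.
  have hX1 : (X + 1).PosDef := Matrix.PosDef.posSemidef_add hX Matrix.PosDef.one
  set C : Matrix (Fin n) (Fin n) ℂ := (open scoped MatrixOrder in CFC.sqrt (X + 1)) with hCdef
  have hCpsd : C.PosSemidef := open scoped MatrixOrder in (CFC.sqrt_nonneg (X + 1)).posSemidef
  have hCC : C * C = X + 1 :=
    open scoped MatrixOrder in CFC.sqrt_mul_sqrt_self _ hX1.posSemidef.nonneg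
  have hCu : IsUnit C := by
    rw [isUnit_iff_isUnit_det]
    have : IsUnit (C.det * C.det) := by
      rw [← det_mul, hCC]; exact hX1.isUnit.map detMonoidHom
    exact isUnit_of_mul_isUnit_left this
  have hCdet : IsUnit C.det := (isUnit_iff_isUnit_det C).mp hCu
  have hCherm : C.IsHermitian := hCpsd.isHermitian
  have hKherm : (C⁻¹).IsHermitian := hCherm.inv
  have hKu : IsUnit (C⁻¹) := by
    rw [isUnit_iff_isUnit_det, det_nonsing_inv, Ring.inverse_eq_inv']
    exact hCdet.inv
  have hC2 : (C * C - 1).PosSemidef := by rw [hCC]; simpa using hX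
  have hcon : ∀ x : EuclideanSpace ℂ (Fin n), ‖toEuclideanLin C⁻¹ x‖ ≤ ‖x‖ :=
    contraction_of_ge_one hCherm hCu hC2
  set Z : Matrix (Fin n) (Fin n) ℂ := C⁻¹ * Y * C⁻¹ with hZdef
  have hZpsd : Z.PosSemidef := by
    rw [hZdef, show C⁻¹ * Y * C⁻¹ = (C⁻¹)ᴴ * Y * C⁻¹ by rw [hKherm.eq]]
    exact hY.conjTranspose_mul_mul_same _
  have hCCinv : C⁻¹ * C⁻¹ = (X + 1)⁻¹ := by rw [← hCC, Matrix.mul_inv_rev]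
  have hCZC : C * Z * C = Y := by
    rw [hZdef, ← mul_assoc, ← mul_assoc, mul_nonsing_inv C hCdet, one_mul, mul_assoc,
      nonsing_inv_mul C hCdet, mul_one]
  have hXY1 : X + Y + 1 = C * (Z + 1) * C := by
    rw [mul_add, add_mul, mul_one, hCC, hCZC]
    abel
  have hmid : (X + 1)⁻¹ - (X + Y + 1)⁻¹ = (C⁻¹)ᴴ * (1 - (Z + 1)⁻¹) * C⁻¹ := by
    rw [hKherm.eq, mul_sub, sub_mul, mul_one, hCCinv, hXY1, Matrix.mul_inv_rev,
      Matrix.mul_inv_rev, ← mul_assoc]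
  have step1 : eigValsDown ((X + 1)⁻¹ - (X + Y + 1)⁻¹) j
      ≤ eigValsDown (1 - (Z + 1)⁻¹) j := by
    rw [hmid]
    exact eigValsDown_conj_le (posSemidef_one_sub_inv hZpsd) hKu hcon j
  have step2 : eigValsDown (1 - (Z + 1)⁻¹) j = gfun (eigValsDown Z j) :=
    eigValsDown_one_sub_inv hZpsd j
  have step3 : eigValsDown Z j ≤ eigValsDown Y j := by
    have h := eigValsDown_conj_le hY hKu hcon j
    rwa [hKherm.eq] at h
  have step4 : eigValsDown (1 - (Y + 1)⁻¹) j = gfun (eigValsDown Y j) :=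
    eigValsDown_one_sub_inv hY j
  rw [step4]
  calc eigValsDown ((X + 1)⁻¹ - (X + Y + 1)⁻¹) j ≤ eigValsDown (1 - (Z + 1)⁻¹) j := step1
    _ = gfun (eigValsDown Z j) := step2
    _ ≤ gfun (eigValsDown Y j) := gfun_monotone step3
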